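/- For every d ≥ 4, the bipartite graph K'' with parts A = {a_1,...,a_d}, B = {b_1,...,b_d} and edge set E = {(a_i,b_j) : i > j} ∪ {(a_i,b_j) : i ≤ 3} is not realizable as a faithful unit distance graph in R^d; consequently there exists a bipartite graph with exactly C(d+3,2) - 6 edges that is not a faithful distance graph in R^d. -/

import Mathlib

/-- The bipartite graph `K''` with parts `A = {a_1,…,a_d}` (left) and `B = {b_1,…,b_d}` (right),
where `a_i` is adjacent to `b_j` iff `i > j` or `i ≤ 3` (1-based indexing; here 0-based:
`i.val > j.val ∨ i.val ≤ 2`). -/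
def Kpp (d : ℕ) : SimpleGraph (Fin d ⊕ Fin d) :=
  SimpleGraph.fromRel (fun u v =>
    match u, v with
    | Sum.inl i, Sum.inr j => j.val < i.val ∨ i.val ≤ 2
    | _, _ => False)

section Aux


open Finset Module

-- the convexity lemma
lemma key3 {E : Type*} [NormedAddCommGroup E] [InnerProductSpace ℝ E]
    (P : Fin 3 → E) (hP : Function.Injective P) (c : Fin 3 → ℝ)
    (h1 : ∑ i, c i = 0) (h2 : ∑ i, c i • P i = 0) (h3 : ∑ i, c i * ‖P i‖ ^ 2 = 0) :
    ∀ i, c i = 0 := by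
  have hq : ∀ p : E, ∑ i, c i * ‖P i - p‖ ^ 2 = 0 := by
    intro p
    have hip : ∑ i, c i * (inner ℝ (P i) p : ℝ) = 0 := by
      have : ∑ i, c i * (inner ℝ (P i) p : ℝ) = (inner ℝ (∑ i, c i • P i) p : ℝ) := by
        rw [sum_inner]
        exact Finset.sum_congr rfl fun i _ => (real_inner_smul_left _ _ _).symm
      rw [this, h2, inner_zero_left]
    calc ∑ i, c i * ‖P i - p‖ ^ 2
        = ∑ i, (c i * ‖P i‖ ^ 2 - 2 * (c i * (inner ℝ (P i) p : ℝ)) + c i * ‖p‖ ^ 2) := by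
          refine Finset.sum_congr rfl fun i _ => ?_
          rw [norm_sub_sq_real]; ring
      _ = (∑ i, c i * ‖P i‖ ^ 2) - 2 * (∑ i, c i * (inner ℝ (P i) p : ℝ))
            + (∑ i, c i) * ‖p‖ ^ 2 := by
          rw [Finset.sum_add_distrib, Finset.sum_sub_distrib, ← Finset.mul_sum,
            ← Finset.sum_mul]
      _ = 0 := by rw [h1, h3, hip]; ring
  have hz : ∀ i j : Fin 3, i ≠ j → 0 < ‖P i - P j‖ ^ 2 := fun i j h => by
    have h2 : 0 < ‖P i - P j‖ := norm_pos_iff.mpr (sub_ne_zero.mpr (fun hh => h (hP hh)))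
    positivity
  have e0 := hq (P 0)
  have e1 := hq (P 1)
  have e2 := hq (P 2)
  rw [Fin.sum_univ_three] at e0 e1 e2
  simp only [sub_self, norm_zero] at e0 e1 e2
  rw [show ‖P 1 - P 0‖ = ‖P 0 - P 1‖ from norm_sub_rev _ _,
    show ‖P 2 - P 0‖ = ‖P 0 - P 2‖ from norm_sub_rev _ _] at e0
  rw [show ‖P 2 - P 1‖ = ‖P 1 - P 2‖ from norm_sub_rev _ _] at e1
  set x := ‖P 0 - P 1‖ ^ 2 with hx
  set y := ‖P 0 - P 2‖ ^ 2 with hy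
  set z := ‖P 1 - P 2‖ ^ 2 with hzz
  have hx0 : 0 < x := hz 0 1 (by decide)
  have hy0 : 0 < y := hz 0 2 (by decide)
  have hz0 : 0 < z := hz 1 2 (by decide)
  -- e0 : c 0 * 0 ^2 + c 1 * x + c 2 * y = 0  (with 0^2 term)
  have hc2 : c 2 = 0 := by
    have h : c 2 * (2 * (y * z)) = 0 := by linear_combination z * e0 + y * e1 - x * e2
    have := mul_pos hy0 hz0
    rcases mul_eq_zero.mp h with h' | h'
    · exact h'
    · nlinarith
  have hc0 : c 0 = 0 := by nlinarith [e1, hx0, hc2]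
  have hc1 : c 1 = 0 := by nlinarith [e0, hx0, hc2]
  intro i; fin_cases i <;> assumption

lemma sum_reduce {d : ℕ} (hd : 3 ≤ d) {M : Type*} [AddCommMonoid M] (g : Fin d → M)
    (hg : ∀ j : Fin d, 3 ≤ j.val → g j = 0) :
    ∑ j, g j = ∑ i : Fin 3, g (Fin.castLE hd i) := by
  have : ∑ i : Fin 3, g (Fin.castLE hd i) = ∑ j ∈ Finset.univ.map (Fin.castLEEmb hd), g j :=
    (Finset.sum_map Finset.univ (Fin.castLEEmb hd) g).symm
  rw [this]
  refine (Finset.sum_subset (Finset.subset_univ _) ?_).symm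
  intro j _ hj
  refine hg j ?_
  by_contra h
  exact hj (Finset.mem_map.mpr ⟨⟨j.val, by omega⟩, Finset.mem_univ _, by
    simp [Fin.castLEEmb, Fin.castLE]⟩)

noncomputable def Ffun {E : Type*} [NormedAddCommGroup E] [InnerProductSpace ℝ E] (a : E) :
    (E × ℝ × ℝ) →ₗ[ℝ] ℝ where
  toFun v := v.2.1 - 2 * (inner ℝ a v.1 : ℝ) + (‖a‖ ^ 2 - 1) * v.2.2
  map_add' v w := by simp [inner_add_right]; ring
  map_smul' r v := by simp [inner_smul_right]; ring


set_option maxHeartbeats 1000000 in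
lemma not_realizable (d : ℕ) (hd : 4 ≤ d) :
    ¬ ∃ f : (Fin d ⊕ Fin d) → EuclideanSpace ℝ (Fin d), Function.Injective f ∧
        ∀ u v, u ≠ v → ((Kpp d).Adj u v ↔ dist (f u) (f v) = 1) := by
  rintro ⟨f, hinj, hf⟩
  have hd3 : 3 ≤ d := by omega
  set A : Fin d → EuclideanSpace ℝ (Fin d) := fun i => f (Sum.inl i) with hAdef
  set B : Fin d → EuclideanSpace ℝ (Fin d) := fun j => f (Sum.inr j) with hBdef
  have hAinj : Function.Injective A := fun a b h => Sum.inl_injective (hinj h)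
  have hBinj : Function.Injective B := fun a b h => Sum.inr_injective (hinj h)
  have hadj : ∀ i j : Fin d, (Kpp d).Adj (Sum.inl i) (Sum.inr j) ↔
      (j.val < i.val ∨ i.val ≤ 2) := by
    intro i j
    rw [Kpp, SimpleGraph.fromRel_adj]
    simp
  have hedge : ∀ i j : Fin d, (j.val < i.val ∨ i.val ≤ 2) → ‖A i - B j‖ = 1 := by
    intro i j h
    have := (hf _ _ (by simp)).mp ((hadj i j).mpr h)
    rwa [dist_eq_norm] at this
  have hnon : ∀ i j : Fin d, ‖A i - B j‖ = 1 → (j.val < i.val ∨ i.val ≤ 2) := by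
    intro i j h
    exact (hadj i j).mp ((hf _ _ (by simp)).mpr (by rwa [dist_eq_norm]))
  -- the lifted vectors
  set u : Fin d → (EuclideanSpace ℝ (Fin d) × ℝ × ℝ) :=
    fun j => (B j, ‖B j‖ ^ 2, 1) with hudef
  set F : Fin 3 → ((EuclideanSpace ℝ (Fin d) × ℝ × ℝ) →ₗ[ℝ] ℝ) :=
    fun i => Ffun (A (Fin.castLE hd3 i)) with hFdef
  have hFu : ∀ i j, F i (u j) = 0 := by
    intro i j
    have h1 : ‖A (Fin.castLE hd3 i) - B j‖ = 1 :=
      hedge _ j (Or.inr (by have hi := i.isLt; simp only [Fin.coe_castLE]; omega))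
    have h2 : ‖A (Fin.castLE hd3 i) - B j‖ ^ 2 = 1 := by rw [h1]; norm_num
    rw [norm_sub_sq_real] at h2
    simp only [hFdef, Ffun, LinearMap.coe_mk, AddHom.coe_mk, hudef]
    linarith
  -- the F's are linearly independent
  have hFli : LinearIndependent ℝ F := by
    rw [Fintype.linearIndependent_iff]
    intro c hc
    have hcv : ∀ v, ∑ i, c i * (F i v) = 0 := by
      intro v
      have := congrFun (congrArg DFunLike.coe hc) v
      simpa [LinearMap.sum_apply] using this
    have h1 : ∑ i, c i = 0 := by
      have := hcv (0, 1, 0)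
      simpa [hFdef, Ffun] using this
    have h3 : ∑ i, c i * ‖A (Fin.castLE hd3 i)‖ ^ 2 = 0 := by
      have h := hcv (0, 0, 1)
      simp only [hFdef, Ffun, LinearMap.coe_mk, AddHom.coe_mk, inner_zero_right] at h
      have : ∑ i, (c i * ‖A (Fin.castLE hd3 i)‖ ^ 2 - c i) = 0 := by
        refine Eq.trans ?_ h
        exact Finset.sum_congr rfl fun i _ => by ring
      rw [Finset.sum_sub_distrib, h1] at this
      linarith
    have h2 : ∑ i, c i • A (Fin.castLE hd3 i) = 0 := by
      have hx : ∀ x : EuclideanSpace ℝ (Fin d),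
          (inner ℝ (∑ i, c i • A (Fin.castLE hd3 i)) x : ℝ) = 0 := by
        intro x
        have h := hcv (x, 0, 0)
        simp only [hFdef, Ffun, LinearMap.coe_mk, AddHom.coe_mk] at h
        rw [sum_inner]
        have : ∑ i, (inner ℝ (c i • A (Fin.castLE hd3 i)) x : ℝ)
            = ∑ i, c i * (inner ℝ (A (Fin.castLE hd3 i)) x : ℝ) :=
          Finset.sum_congr rfl fun i _ => real_inner_smul_left _ _ _
        rw [this]
        have h' : ∑ i, c i * (-2 * (inner ℝ (A (Fin.castLE hd3 i)) x : ℝ)) = 0 := by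
          refine Eq.trans ?_ h
          exact Finset.sum_congr rfl fun i _ => by ring
        have h'' : (-2 : ℝ) * ∑ i, c i * (inner ℝ (A (Fin.castLE hd3 i)) x : ℝ) = 0 := by
          rw [Finset.mul_sum]
          refine Eq.trans ?_ h'
          exact Finset.sum_congr rfl fun i _ => by ring
        linarith
      exact inner_self_eq_zero.mp (hx _)
    have := key3 (fun i => A (Fin.castLE hd3 i))
      (fun a b h => (Fin.castLE_injective hd3) (hAinj h)) c h1 h2 h3
    exact this
  -- u is linearly dependent
  set U : Submodule ℝ (EuclideanSpace ℝ (Fin d) × ℝ × ℝ) :=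
    Submodule.span ℝ (Set.range u) with hUdef
  have hFU : ∀ i, F i ∈ U.dualAnnihilator := by
    intro i
    rw [Submodule.mem_dualAnnihilator]
    intro w hw
    have hle : U ≤ LinearMap.ker (F i) := by
      rw [hUdef, Submodule.span_le]
      rintro _ ⟨j, rfl⟩
      exact hFu i j
    exact hle hw
  have hnotLI : ¬ LinearIndependent ℝ u := by
    intro hLI
    have hUr : finrank ℝ U = d := by
      rw [hUdef, finrank_span_eq_card hLI, Fintype.card_fin]
    have hann : 3 ≤ finrank ℝ U.dualAnnihilator := by
      have hspan : Submodule.span ℝ (Set.range F) ≤ U.dualAnnihilator := by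
        rw [Submodule.span_le]
        rintro _ ⟨i, rfl⟩
        exact hFU i
      have h3 : finrank ℝ (Submodule.span ℝ (Set.range F)) = 3 := by
        rw [finrank_span_eq_card hFli, Fintype.card_fin]
      calc (3 : ℕ) = finrank ℝ (Submodule.span ℝ (Set.range F)) := h3.symm
        _ ≤ finrank ℝ U.dualAnnihilator := Submodule.finrank_mono hspan
    have hquot := Submodule.finrank_quotient_add_finrank U
    have heq : finrank ℝ (↥U.dualAnnihilator)
        = finrank ℝ ((EuclideanSpace ℝ (Fin d) × ℝ × ℝ) ⧸ U) :=
      (Subspace.quotEquivAnnihilator U).finrank_eq.symm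
    have hV : finrank ℝ (EuclideanSpace ℝ (Fin d) × ℝ × ℝ) = d + 2 := by
      simp [finrank_euclideanSpace]
    omega
  obtain ⟨g, hgsum, i₀, hgi₀⟩ := Fintype.not_linearIndependent_iff.mp hnotLI
  have hsumB : ∑ j, g j • B j = 0 := by
    have := congrArg Prod.fst hgsum
    simpa [Prod.fst_sum, hudef] using this
  have hsumQ : ∑ j, g j * ‖B j‖ ^ 2 = 0 := by
    have := congrArg (fun v => v.2.1) hgsum
    simpa [Prod.fst_sum, Prod.snd_sum, hudef] using this
  have hsum1 : ∑ j, g j = 0 := by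
    have := congrArg (fun v => v.2.2) hgsum
    simpa [Prod.snd_sum, hudef] using this
  -- the maximal index of the support
  set s : Finset (Fin d) := Finset.univ.filter (fun j => g j ≠ 0) with hsdef
  have hs : s.Nonempty := ⟨i₀, by simp [hsdef, hgi₀]⟩
  set k : Fin d := s.max' hs with hkdef
  have hgk : g k ≠ 0 := by
    have h : k ∈ s := s.max'_mem hs
    simp only [hsdef, Finset.mem_filter] at h
    exact h.2
  have hkmax : ∀ j, k < j → g j = 0 := by
    intro j hj
    by_contra h
    exact absurd (s.le_max' j (by simp [hsdef, h])) (not_le.mpr hj)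
  have hk3 : 3 ≤ k.val := by
    by_contra hlt
    push_neg at hlt
    have hz : ∀ j : Fin d, 3 ≤ j.val → g j = 0 := by
      intro j hj
      by_contra h
      have := s.le_max' j (by simp [hsdef, h])
      rw [Fin.le_def] at this
      omega
    have hr1 : ∑ i : Fin 3, g (Fin.castLE hd3 i) = 0 := by
      rw [← sum_reduce hd3 g hz]; exact hsum1
    have hrB : ∑ i : Fin 3, g (Fin.castLE hd3 i) • B (Fin.castLE hd3 i) = 0 := by
      rw [← sum_reduce hd3 (fun j => g j • B j) (fun j hj => by show g j • B j = 0; rw [hz j hj, zero_smul])]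
      exact hsumB
    have hrQ : ∑ i : Fin 3, g (Fin.castLE hd3 i) * ‖B (Fin.castLE hd3 i)‖ ^ 2 = 0 := by
      rw [← sum_reduce hd3 (fun j => g j * ‖B j‖ ^ 2) (fun j hj => by show g j * ‖B j‖ ^ 2 = 0; rw [hz j hj, zero_mul])]
      exact hsumQ
    have hc := key3 (fun i => B (Fin.castLE hd3 i))
      (fun a b h => (Fin.castLE_injective hd3) (hBinj h))
      (fun i => g (Fin.castLE hd3 i)) hr1 hrB hrQ
    apply hgk
    rcases Nat.lt_or_ge k.val 3 with h | h
    · have := hc ⟨k.val, h⟩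
      simpa [Fin.castLE] using this
    · exact hz k h
  -- evaluate the dependency at A k
  have hid : ∑ j, g j * (‖A k - B j‖ ^ 2 - 1) = 0 := by
    have hip : ∑ j, g j * (inner ℝ (A k) (B j) : ℝ) = 0 := by
      have : ∑ j, g j * (inner ℝ (A k) (B j) : ℝ) = (inner ℝ (A k) (∑ j, g j • B j) : ℝ) := by
        rw [inner_sum]
        exact Finset.sum_congr rfl fun j _ => (real_inner_smul_right _ _ _).symm
      rw [this, hsumB, inner_zero_right]
    calc ∑ j, g j * (‖A k - B j‖ ^ 2 - 1)
        = ∑ j, (g j * ‖A k‖ ^ 2 - 2 * (g j * (inner ℝ (A k) (B j) : ℝ))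
            + g j * ‖B j‖ ^ 2 - g j) := by
          refine Finset.sum_congr rfl fun j _ => ?_
          rw [norm_sub_sq_real]; ring
      _ = (∑ j, g j) * ‖A k‖ ^ 2 - 2 * (∑ j, g j * (inner ℝ (A k) (B j) : ℝ))
            + (∑ j, g j * ‖B j‖ ^ 2) - (∑ j, g j) := by
          rw [Finset.sum_sub_distrib, Finset.sum_add_distrib, Finset.sum_sub_distrib,
            ← Finset.mul_sum, ← Finset.sum_mul]
      _ = 0 := by rw [hsum1, hsumQ, hip]; ring
  have hsingle : g k * (‖A k - B k‖ ^ 2 - 1) = 0 := by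
    rw [← hid]
    symm
    apply Finset.sum_eq_single_of_mem k (Finset.mem_univ k)
    intro j _ hj
    rcases lt_trichotomy j k with h | h | h
    · have : ‖A k - B j‖ = 1 := hedge k j (Or.inl (by rw [Fin.lt_def] at h; exact h))
      rw [this]; ring
    · exact absurd h hj
    · rw [hkmax j h]; ring
  have hABk : ‖A k - B k‖ = 1 := by
    have h2 : ‖A k - B k‖ ^ 2 = 1 := by
      rcases mul_eq_zero.mp hsingle with h | h
      · exact absurd h hgk
      · linarith
    nlinarith [norm_nonneg (A k - B k)]
  have := hnon k k hABk
  omega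


lemma kpp_adj (d : ℕ) (i j : Fin d) :
    (Kpp d).Adj (Sum.inl i) (Sum.inr j) ↔ (j.val < i.val ∨ i.val ≤ 2) := by
  rw [Kpp, SimpleGraph.fromRel_adj]
  simp

lemma edge_count (d : ℕ) (hd : 4 ≤ d) :
    Nat.card (Kpp d).edgeSet = Nat.choose (d + 3) 2 - 6 := by
  classical
  have hcongr : Nat.card (Kpp d).edgeSet
      = Nat.card {p : Fin d × Fin d // p.2.val < p.1.val ∨ p.1.val ≤ 2} := by
    refine Nat.card_congr (Equiv.symm (Equiv.ofBijective
      (fun p => (⟨s(Sum.inl p.1.1, Sum.inr p.1.2), by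
        rw [SimpleGraph.mem_edgeSet, kpp_adj]; exact p.2⟩ : (Kpp d).edgeSet)) ⟨?_, ?_⟩))
    · rintro ⟨⟨a, b⟩, hab⟩ ⟨⟨a', b'⟩, hab'⟩ h
      simp only [Subtype.mk.injEq, Sym2.eq, Sym2.rel_iff', Prod.mk.injEq, Prod.swap_prod_mk] at h
      rcases h with ⟨h1, h2⟩ | ⟨h1, h2⟩
      · simp only [Sum.inl.injEq] at h1
        simp only [Sum.inr.injEq] at h2
        simp [h1, h2]
      · exact absurd h1 (by simp)
    · rintro ⟨e, he⟩
      induction e with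
      | _ v w =>
        rw [SimpleGraph.mem_edgeSet] at he
        rcases v with i | i <;> rcases w with j | j
        · exact absurd he (by rw [Kpp, SimpleGraph.fromRel_adj]; simp)
        · exact ⟨⟨(i, j), (kpp_adj d i j).mp he⟩, rfl⟩
        · refine ⟨⟨(j, i), (kpp_adj d j i).mp he.symm⟩, ?_⟩
          simp [Sym2.eq_swap]
        · exact absurd he (by rw [Kpp, SimpleGraph.fromRel_adj]; simp)
  rw [hcongr, Nat.card_eq_fintype_card]
  rw [Fintype.card_congr (Equiv.subtypeProdEquivSigmaSubtype
    (fun (i : Fin d) (j : Fin d) => j.val < i.val ∨ i.val ≤ 2))]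
  rw [Fintype.card_sigma]
  have hfib : ∀ i : Fin d, Fintype.card {j : Fin d // j.val < i.val ∨ i.val ≤ 2}
      = if i.val ≤ 2 then d else i.val := by
    intro i
    by_cases h : i.val ≤ 2
    · rw [if_pos h]
      have : ∀ j : Fin d, (j.val < i.val ∨ i.val ≤ 2) := fun j => Or.inr h
      rw [Fintype.card_subtype]
      rw [Finset.filter_true_of_mem (fun j _ => this j)]
      simp
    · rw [if_neg h]
      have he : {j : Fin d // j.val < i.val ∨ i.val ≤ 2} ≃ Fin i.val :=
        { toFun := fun j => ⟨j.1.val, by rcases j.2 with hh | hh; exact hh; exact absurd hh h⟩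
          invFun := fun m => ⟨⟨m.val, m.isLt.trans i.isLt⟩, Or.inl m.isLt⟩
          left_inv := fun j => by ext; rfl
          right_inv := fun m => rfl }
      rw [Fintype.card_congr he, Fintype.card_fin]
  rw [Finset.sum_congr rfl (fun i _ => hfib i)]
  -- now a sum over Fin d
  rw [Fin.sum_univ_eq_sum_range (fun i => if i ≤ 2 then d else i) d]
  obtain ⟨e, rfl⟩ : ∃ e, d = e + 4 := ⟨d - 4, by omega⟩
  rw [← Finset.sum_filter_add_sum_filter_not (Finset.range (e + 4)) (fun i => i ≤ 2)]
  have hf1 : Finset.filter (fun i => i ≤ 2) (Finset.range (e + 4)) = Finset.range 3 := by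
    ext i; simp [Finset.mem_range, Finset.mem_filter]; omega
  have hf2 : Finset.filter (fun i => ¬ i ≤ 2) (Finset.range (e + 4)) = Finset.Ico 3 (e + 4) := by
    ext i; simp [Finset.mem_range, Finset.mem_filter, Finset.mem_Ico]; omega
  rw [hf1, hf2]
  have ha : (∑ x ∈ Finset.range 3, if x ≤ 2 then (e + 4) else x) = 3 * (e + 4) := by
    rw [Finset.sum_congr rfl (fun x hx => if_pos (by
      have := Finset.mem_range.mp hx; omega))]
    rw [Finset.sum_const, Finset.card_range, smul_eq_mul]
  have hb : (∑ x ∈ Finset.Ico 3 (e + 4), if x ≤ 2 then (e + 4) else x)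
      = ∑ x ∈ Finset.Ico 3 (e + 4), x := by
    refine Finset.sum_congr rfl (fun x hx => if_neg (by
      have := Finset.mem_Ico.mp hx; omega))
  rw [ha, hb]
  have hsplit : (∑ i ∈ Finset.range 3, i) + ∑ i ∈ Finset.Ico 3 (e + 4), i
      = ∑ i ∈ Finset.range (e + 4), i := Finset.sum_range_add_sum_Ico _ (by omega)
  have hr3 : (∑ i ∈ Finset.range 3, i) = 3 := by decide
  have hG : (∑ i ∈ Finset.range (e + 4), i) * 2 = (e + 4) * (e + 3) := by
    rw [Finset.sum_range_id_mul_two]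
    rw [show e + 4 - 1 = e + 3 from by omega]
  have hC : (e + 4 + 3).choose 2 * 2 = (e + 7) * (e + 6) := by
    rw [Nat.choose_two_right]
    rw [show e + 4 + 3 - 1 = e + 6 from by omega]
    have hdvd : 2 ∣ (e + 4 + 3) * (e + 6) := by
      rcases Nat.even_or_odd e with ⟨m, rfl⟩ | ⟨m, rfl⟩
      · exact ⟨(m + m + 7) * (m + 3), by ring⟩
      · exact ⟨(m + 4) * (2 * m + 7), by ring⟩
    rw [Nat.div_mul_cancel hdvd]
  set G := ∑ i ∈ Finset.range (e + 4), i with hGdef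
  set C := (e + 4 + 3).choose 2 with hCdef
  have h1 : G * 2 = e * e + 7 * e + 12 := by rw [hG]; ring
  have h2 : C * 2 = e * e + 13 * e + 42 := by rw [hC]; ring
  rw [hr3] at hsplit
  have h3 : ∑ i ∈ Finset.Ico 3 (e + 4), i = G - 3 := by omega
  rw [h3]
  generalize e * e = t at h1 h2
  omega

end Aux

/-- for `d ≥ 4`, the bipartite graph `K''` is not realizable as a faithful
unit distance graph in `ℝ^d`; moreover it has exactly `C(d+3,2) - 6` edges, so there is a
bipartite graph with `C(d+3,2) - 6` edges which is not a faithful distance graph in `ℝ^d`. -/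
theorem stmt_3 (d : ℕ) (hd : 4 ≤ d) :
    (¬ ∃ f : (Fin d ⊕ Fin d) → EuclideanSpace ℝ (Fin d), Function.Injective f ∧
        ∀ u v, u ≠ v → ((Kpp d).Adj u v ↔ dist (f u) (f v) = 1)) ∧
    Nat.card (Kpp d).edgeSet = Nat.choose (d + 3) 2 - 6 := by
  exact ⟨not_realizable d hd, edge_count d hd⟩
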